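/- There exist constants C₁ > 0 and C₂ > 0 such that for every α ∈ (0,1) and every s ≥ 0 one has G_α(s) ≥ C₁ · B_α(s)^(2−q) · L_q(s + e) − C₂, where e is Euler's number. -/

import Mathlib

open Real MeasureTheory

section
variable (χ q α : ℝ)

private lemma f_nonneg (hχ : 0 < χ) (hα : 0 < α) {σ : ℝ} (hσ : 0 ≤ σ) :
    0 ≤ 1 / (χ * σ * (σ + 1) ^ (q - 1) / (1 + α * (σ + 1)) ^ q) := by
  rcases hσ.eq_or_lt with h | h
  · simp [← h]
  · positivity

private lemma f_intble (hχ : 0 < χ) (hα : 0 < α) {a b : ℝ} (ha : 0 < a) (hb : 0 < b) :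
    IntervalIntegrable (fun σ => 1 / (χ * σ * (σ + 1) ^ (q - 1) / (1 + α * (σ + 1)) ^ q))
      volume a b := by
  apply ContinuousOn.intervalIntegrable
  have hpos : ∀ x ∈ Set.uIcc a b, 0 < x := fun x hx => lt_of_lt_of_le (lt_min ha hb) hx.1
  have h1 : ContinuousOn (fun x : ℝ => (x + 1) ^ (q - 1)) (Set.uIcc a b) :=
    (continuousOn_id.add continuousOn_const).rpow_const
      (fun x hx => Or.inl (by have := hpos x hx; show (x + 1 : ℝ) ≠ 0; positivity))
  have h2 : ContinuousOn (fun x : ℝ => (1 + α * (x + 1)) ^ q) (Set.uIcc a b) :=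
    (continuousOn_const.add (continuousOn_const.mul (continuousOn_id.add continuousOn_const))).rpow_const
      (fun x hx => Or.inl (by have := hpos x hx; show (1 + α * (x + 1) : ℝ) ≠ 0; positivity))
  apply ContinuousOn.div continuousOn_const
  · exact ((continuousOn_const.mul continuousOn_id).mul h1).div h2
      (fun x hx => by have := hpos x hx; positivity)
  · intro x hx
    have := hpos x hx
    positivity

-- F is monotone on [1, M]
private lemma F_mono (hχ : 0 < χ) (hα : 0 < α) {M : ℝ} (hM : 1 ≤ M) :
    MonotoneOn (fun ρ => ∫ σ in (1:ℝ)..ρ,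
        1 / (χ * σ * (σ + 1) ^ (q - 1) / (1 + α * (σ + 1)) ^ q)) (Set.Icc 1 M) := by
  intro x hx y hy hxy
  simp only
  rw [← intervalIntegral.integral_add_adjacent_intervals
    (f_intble χ q α hχ hα one_pos (lt_of_lt_of_le one_pos hx.1))
    (f_intble χ q α hχ hα (lt_of_lt_of_le one_pos hx.1) (lt_of_lt_of_le one_pos hy.1))]
  have h0 : 0 ≤ ∫ σ in x..y, 1 / (χ * σ * (σ + 1) ^ (q - 1) / (1 + α * (σ + 1)) ^ q) :=
    intervalIntegral.integral_nonneg hxy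
      (fun u hu => f_nonneg χ q α hχ hα (le_trans (by linarith [hx.1]) hu.1))
  linarith

-- F ρ is nonnegative for ρ ≥ 1, nonpositive for 0 ≤ ρ ≤ 1
private lemma F_nonneg (hχ : 0 < χ) (hα : 0 < α) {ρ : ℝ} (hρ : 1 ≤ ρ) :
    0 ≤ ∫ σ in (1:ℝ)..ρ, 1 / (χ * σ * (σ + 1) ^ (q - 1) / (1 + α * (σ + 1)) ^ q) :=
  intervalIntegral.integral_nonneg hρ
    (fun u hu => f_nonneg χ q α hχ hα (le_trans zero_le_one hu.1))

private lemma G_nonneg (hχ : 0 < χ) (hα : 0 < α) {s : ℝ} (hs : 0 ≤ s) :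
    0 ≤ ∫ ρ in (1:ℝ)..s, ∫ σ in (1:ℝ)..ρ,
        1 / (χ * σ * (σ + 1) ^ (q - 1) / (1 + α * (σ + 1)) ^ q) := by
  rcases le_or_gt 1 s with h1 | h1
  · exact intervalIntegral.integral_nonneg h1 (fun ρ hρ => F_nonneg χ q α hχ hα hρ.1)
  · rw [intervalIntegral.integral_symm]
    have h0 : (∫ ρ in s..(1:ℝ), ∫ σ in (1:ℝ)..ρ,
        1 / (χ * σ * (σ + 1) ^ (q - 1) / (1 + α * (σ + 1)) ^ q)) ≤ 0 := by
      have := intervalIntegral.integral_nonneg (μ := volume) (a := s) (b := 1)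
        (f := fun ρ => - ∫ σ in (1:ℝ)..ρ,
          1 / (χ * σ * (σ + 1) ^ (q - 1) / (1 + α * (σ + 1)) ^ q)) h1.le ?_
      · rw [intervalIntegral.integral_neg] at this; linarith
      · intro ρ hρ
        simp only [Left.nonneg_neg_iff]
        rw [intervalIntegral.integral_symm]
        have : 0 ≤ ∫ σ in ρ..(1:ℝ),
            1 / (χ * σ * (σ + 1) ^ (q - 1) / (1 + α * (σ + 1)) ^ q) :=
          intervalIntegral.integral_nonneg hρ.2
            (fun u hu => f_nonneg χ q α hχ hα (le_trans (le_trans hs hρ.1) hu.1))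
        linarith
    linarith

end

private lemma key_pointwise (χ q α : ℝ) (hχ : 0 < χ) (hq : q ≤ 1) (hα : 0 < α) (hα1 : α < 1)
    {s σ : ℝ} (hs : 4 ≤ s) (hσ1 : s / 2 ≤ σ) (hσ2 : σ ≤ s) :
    min ((2:ℝ) ^ q) 1 / χ * ((s + 1) / (1 + α * (s + 1))) ^ (-q) ≤
      1 / (χ * σ * (σ + 1) ^ (q - 1) / (1 + α * (σ + 1)) ^ q) := by
  have hσ0 : 2 ≤ σ := by linarith
  have hu : (0:ℝ) < σ + 1 := by linarith
  have hv : (0:ℝ) < 1 + α * (σ + 1) := by nlinarith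
  have hvs : (0:ℝ) < 1 + α * (s + 1) := by nlinarith
  set b : ℝ := (s + 1) / (1 + α * (s + 1)) with hb
  set B : ℝ := (σ + 1) / (1 + α * (σ + 1)) with hB
  have hbpos : 0 < b := by positivity
  have hBpos : 0 < B := by positivity
  have e1 : B ^ (-q) = (1 + α * (σ + 1)) ^ q / (σ + 1) ^ q := by
    rw [Real.rpow_neg hBpos.le, hB, Real.div_rpow hu.le hv.le, inv_div]
  have e2 : (σ + 1) ^ (q - 1) = (σ + 1) ^ q / (σ + 1) := by
    rw [Real.rpow_sub hu, Real.rpow_one]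
  -- identity: f σ = (σ+1)/(χ σ) * B^(-q)
  have hid : 1 / (χ * σ * (σ + 1) ^ (q - 1) / (1 + α * (σ + 1)) ^ q)
      = (σ + 1) / (χ * σ) * B ^ (-q) := by
    have h1 : (σ + 1) ^ q ≠ 0 := by positivity
    have h2 : (1 + α * (σ + 1)) ^ q ≠ 0 := by positivity
    rw [e1, e2]
    field_simp
  rw [hid]
  -- B ≤ b and b ≤ 2B
  have hB1 : B ≤ b := by
    rw [hB, hb, div_le_div_iff₀ hv hvs]
    nlinarith
  have hB2 : b ≤ 2 * B := by
    have h2B : 2 * B = 2 * (σ + 1) / (1 + α * (σ + 1)) := by rw [hB]; ring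
    rw [h2B, hb, div_le_div_iff₀ hvs hv]
    nlinarith [mul_nonneg (mul_nonneg hα.le hu.le) (by linarith : (0:ℝ) ≤ s + 1)]
  -- B^(-q) ≥ min (2^q) 1 * b^(-q)
  have hstep : min ((2:ℝ) ^ q) 1 * b ^ (-q) ≤ B ^ (-q) := by
    rcases le_or_gt 0 q with hq0 | hq0
    · have h1 : b ^ (-q) ≤ B ^ (-q) :=
        Real.rpow_le_rpow_of_nonpos hBpos hB1 (by linarith)
      have h2 : min ((2:ℝ) ^ q) 1 ≤ 1 := min_le_right _ _
      nlinarith [Real.rpow_pos_of_pos hbpos (-q)]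
    · have h1 : (b / 2) ^ (-q) ≤ B ^ (-q) :=
        Real.rpow_le_rpow (by positivity) (by linarith) (by linarith)
      have h2 : (b / 2) ^ (-q) = b ^ (-q) * 2 ^ q := by
        rw [Real.div_rpow hbpos.le (by norm_num : (0:ℝ) ≤ 2),
          Real.rpow_neg (by norm_num : (0:ℝ) ≤ 2)]
        field_simp
      calc min ((2:ℝ) ^ q) 1 * b ^ (-q)
          ≤ 2 ^ q * b ^ (-q) :=
            mul_le_mul_of_nonneg_right (min_le_left _ _) (Real.rpow_nonneg hbpos.le _)
        _ = (b / 2) ^ (-q) := by rw [h2]; ring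
        _ ≤ B ^ (-q) := h1
  have hfrac : 1 / χ ≤ (σ + 1) / (χ * σ) := by
    rw [div_le_div_iff₀ hχ (by positivity)]
    nlinarith
  calc min ((2:ℝ) ^ q) 1 / χ * b ^ (-q)
      = 1 / χ * (min ((2:ℝ) ^ q) 1 * b ^ (-q)) := by ring
    _ ≤ 1 / χ * B ^ (-q) := mul_le_mul_of_nonneg_left hstep (by positivity)
    _ ≤ (σ + 1) / (χ * σ) * B ^ (-q) :=
        mul_le_mul_of_nonneg_right hfrac (Real.rpow_nonneg hBpos.le _)

set_option maxHeartbeats 1000000 in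
theorem stmt1 (χ q : ℝ) (hχ : 0 < χ) (hq : q ≤ 1) :
    ∃ C₁ > (0:ℝ), ∃ C₂ > (0:ℝ), ∀ α ∈ Set.Ioo (0:ℝ) 1, ∀ s ≥ (0:ℝ),
      (∫ ρ in (1:ℝ)..s, ∫ σ in (1:ℝ)..ρ,
          1 / (χ * σ * (σ + 1) ^ (q - 1) / (1 + α * (σ + 1)) ^ q)) ≥
        C₁ * ((s + 1) / (1 + α * (s + 1))) ^ (2 - q) *
          (if q < 1 then 1 else Real.log (s + Real.exp 1)) - C₂ := by
  by_cases hq1 : q < 1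
  · -- case q < 1
    have hcpos : (0:ℝ) < min ((2:ℝ) ^ q) 1 := lt_min (Real.rpow_pos_of_pos two_pos q) one_pos
    refine ⟨min ((2:ℝ) ^ q) 1 / (64 * χ), by positivity,
      min ((2:ℝ) ^ q) 1 / (64 * χ) * 5 ^ (2 - q) + 1, by positivity, ?_⟩
    rintro α ⟨hα0, hα1⟩ s hs
    rw [if_pos hq1, mul_one, ge_iff_le]
    have hvs : (0:ℝ) < 1 + α * (s + 1) := by nlinarith
    set b : ℝ := (s + 1) / (1 + α * (s + 1)) with hb
    have hbpos : 0 < b := by positivity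
    have hble : b ≤ s + 1 := by
      rw [hb]
      exact div_le_self (by linarith) (by nlinarith)
    rcases le_or_gt s 4 with hs4 | hs4
    · -- small s
      have hG := G_nonneg χ q α hχ hα0 hs
      have h5 : b ^ (2 - q) ≤ (5:ℝ) ^ (2 - q) :=
        Real.rpow_le_rpow hbpos.le (by linarith) (by linarith)
      have h6 : min ((2:ℝ) ^ q) 1 / (64 * χ) * b ^ (2 - q) ≤
          min ((2:ℝ) ^ q) 1 / (64 * χ) * 5 ^ (2 - q) :=
        mul_le_mul_of_nonneg_left h5 (by positivity)
      linarith
    · -- main case s > 4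
      have hs4' : (4:ℝ) ≤ s := hs4.le
      have h12 : (0:ℝ) < s / 2 := by linarith
      have h112 : (1:ℝ) ≤ s / 2 := by linarith
      have hmnn : 0 ≤ min ((2:ℝ) ^ q) 1 / χ * b ^ (-q) := by positivity
      -- lower bound for inner integral on [3s/4, s]
      have hF34 : ∀ ρ ∈ Set.Icc (3 * s / 4) s,
          s / 4 * (min ((2:ℝ) ^ q) 1 / χ * b ^ (-q)) ≤
            ∫ σ in (1:ℝ)..ρ, 1 / (χ * σ * (σ + 1) ^ (q - 1) / (1 + α * (σ + 1)) ^ q) := by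
        intro ρ hρ
        have hρpos : (0:ℝ) < ρ := by
          have := hρ.1; linarith
        have esplit := (intervalIntegral.integral_add_adjacent_intervals
          (f_intble χ q α hχ hα0 one_pos h12)
          (f_intble χ q α hχ hα0 h12 hρpos)).symm
        have h0 : 0 ≤ ∫ σ in (1:ℝ)..(s/2),
            1 / (χ * σ * (σ + 1) ^ (q - 1) / (1 + α * (σ + 1)) ^ q) :=
          intervalIntegral.integral_nonneg h112
            (fun u hu => f_nonneg χ q α hχ hα0 (le_trans zero_le_one hu.1))
        have h1 : (∫ _σ in (s/2)..ρ, min ((2:ℝ) ^ q) 1 / χ * b ^ (-q)) ≤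
            ∫ σ in (s/2)..ρ, 1 / (χ * σ * (σ + 1) ^ (q - 1) / (1 + α * (σ + 1)) ^ q) :=
          intervalIntegral.integral_mono_on (by linarith [hρ.1]) intervalIntegrable_const
            (f_intble χ q α hχ hα0 h12 hρpos)
            (fun σ hσ => key_pointwise χ q α hχ hq hα0 hα1 hs4' hσ.1 (le_trans hσ.2 hρ.2))
        rw [intervalIntegral.integral_const, smul_eq_mul] at h1
        have h2 : s / 4 * (min ((2:ℝ) ^ q) 1 / χ * b ^ (-q)) ≤
            (ρ - s / 2) * (min ((2:ℝ) ^ q) 1 / χ * b ^ (-q)) :=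
          mul_le_mul_of_nonneg_right (by linarith [hρ.1]) hmnn
        rw [esplit]
        linarith
      -- outer integral
      have hs1 : (1:ℝ) ≤ s := by linarith
      have hFm := F_mono χ q α hχ hα0 hs1
      have hInt1 : IntervalIntegrable (fun ρ => ∫ σ in (1:ℝ)..ρ,
          1 / (χ * σ * (σ + 1) ^ (q - 1) / (1 + α * (σ + 1)) ^ q)) volume 1 (3*s/4) := by
        apply MonotoneOn.intervalIntegrable
        rw [Set.uIcc_of_le (by linarith)]
        exact hFm.mono (Set.Icc_subset_Icc le_rfl (by linarith))
      have hInt2 : IntervalIntegrable (fun ρ => ∫ σ in (1:ℝ)..ρ,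
          1 / (χ * σ * (σ + 1) ^ (q - 1) / (1 + α * (σ + 1)) ^ q)) volume (3*s/4) s := by
        apply MonotoneOn.intervalIntegrable
        rw [Set.uIcc_of_le (by linarith)]
        exact hFm.mono (Set.Icc_subset_Icc (by linarith) le_rfl)
      have esplit := (intervalIntegral.integral_add_adjacent_intervals hInt1 hInt2).symm
      have hpos1 : 0 ≤ ∫ ρ in (1:ℝ)..(3*s/4), ∫ σ in (1:ℝ)..ρ,
          1 / (χ * σ * (σ + 1) ^ (q - 1) / (1 + α * (σ + 1)) ^ q) :=
        intervalIntegral.integral_nonneg (by linarith) (fun ρ hρ => F_nonneg χ q α hχ hα0 hρ.1)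
      have hlow : (∫ _ρ in (3*s/4)..s, s / 4 * (min ((2:ℝ) ^ q) 1 / χ * b ^ (-q))) ≤
          ∫ ρ in (3*s/4)..s, ∫ σ in (1:ℝ)..ρ,
            1 / (χ * σ * (σ + 1) ^ (q - 1) / (1 + α * (σ + 1)) ^ q) :=
        intervalIntegral.integral_mono_on (by linarith) intervalIntegrable_const hInt2 hF34
      rw [intervalIntegral.integral_const, smul_eq_mul] at hlow
      -- final comparison
      have hpow : b ^ ((2:ℝ) - q) = b ^ (2:ℕ) * b ^ (-q) := by
        rw [show (2:ℝ) - q = ((2:ℕ):ℝ) + (-q) by push_cast; ring, Real.rpow_add hbpos,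
          Real.rpow_natCast]
      have hbq : 0 ≤ b ^ (-q) := Real.rpow_nonneg hbpos.le _
      have hb2 : b ^ (2:ℕ) ≤ 4 * s ^ 2 := by nlinarith
      have hfin : min ((2:ℝ) ^ q) 1 / (64 * χ) * b ^ ((2:ℝ) - q) ≤
          (s - 3*s/4) * (s / 4 * (min ((2:ℝ) ^ q) 1 / χ * b ^ (-q))) := by
        rw [hpow]
        calc min ((2:ℝ) ^ q) 1 / (64 * χ) * (b ^ (2:ℕ) * b ^ (-q))
            ≤ min ((2:ℝ) ^ q) 1 / (64 * χ) * (4 * s ^ 2 * b ^ (-q)) :=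
              mul_le_mul_of_nonneg_left (mul_le_mul_of_nonneg_right hb2 hbq) (by positivity)
          _ = (s - 3*s/4) * (s / 4 * (min ((2:ℝ) ^ q) 1 / χ * b ^ (-q))) := by ring
      have hC2 : 0 ≤ min ((2:ℝ) ^ q) 1 / (64 * χ) * 5 ^ (2 - q) := by positivity
      rw [esplit]
      linarith
  · -- case q = 1
    have hq' : q = 1 := le_antisymm hq (not_lt.mp hq1)
    subst hq'
    refine ⟨1 / (8 * χ), by positivity, 27 * (1 / (8 * χ)) + 1, by positivity, ?_⟩
    rintro α ⟨hα0, hα1⟩ s hs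
    rw [if_neg (lt_irrefl 1), ge_iff_le, show (2:ℝ) - 1 = 1 by norm_num, Real.rpow_one]
    have hvs : (0:ℝ) < 1 + α * (s + 1) := by nlinarith
    set b : ℝ := (s + 1) / (1 + α * (s + 1)) with hb
    have hbpos : 0 < b := by positivity
    have hble : b ≤ s + 1 := by
      rw [hb]
      exact div_le_self (by linarith) (by nlinarith)
    have hexp1 : (2:ℝ) ≤ Real.exp 1 := by
      have := Real.add_one_le_exp (1:ℝ); linarith
    have hlognn : 0 ≤ Real.log (s + Real.exp 1) :=
      Real.log_nonneg (by linarith)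
    rcases le_or_gt s 8 with hs8 | hs8
    · -- small s
      have hG := G_nonneg χ 1 α hχ hα0 hs
      have hlog3 : Real.log (s + Real.exp 1) ≤ 3 := by
        rw [Real.log_le_iff_le_exp (by linarith)]
        have h3 : Real.exp 1 ^ (3:ℕ) = Real.exp 3 := by
          rw [← Real.exp_nat_mul]; norm_num
        have he9 : (2.7182818283:ℝ) < Real.exp 1 := Real.exp_one_gt_d9
        have he9' : Real.exp 1 < 2.7182818286 := Real.exp_one_lt_d9
        have h4 : (2.7182818283:ℝ) ^ (3:ℕ) < Real.exp 1 ^ (3:ℕ) := by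
          gcongr <;> norm_num
        have h5 : (19:ℝ) < (2.7182818283:ℝ) ^ (3:ℕ) := by norm_num
        linarith
      have hb9 : b ≤ 9 := by linarith
      have hprod : b * Real.log (s + Real.exp 1) ≤ 27 := by
        nlinarith
      have : 1 / (8 * χ) * b * Real.log (s + Real.exp 1) ≤ 1 / (8 * χ) * 27 := by
        rw [mul_assoc]
        exact mul_le_mul_of_nonneg_left hprod (by positivity)
      have h27 : 1 / (8 * χ) * 27 = 27 * (1 / (8 * χ)) := by ring
      linarith
    · -- main case s > 8
      have hs8' : (8:ℝ) ≤ s := hs8.le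
      have hs1 : (1:ℝ) ≤ s := by linarith
      -- pointwise bound
      have hfσ : ∀ σ : ℝ, 1 ≤ σ →
          1 / χ * (1 / σ) ≤ 1 / (χ * σ * (σ + 1) ^ ((1:ℝ) - 1) / (1 + α * (σ + 1)) ^ (1:ℝ)) := by
        intro σ hσ
        have hσ0 : (0:ℝ) < σ := lt_of_lt_of_le one_pos hσ
        have hv : (0:ℝ) < 1 + α * (σ + 1) := by nlinarith
        have e0 : ((1:ℝ) - 1) = 0 := by norm_num
        rw [e0, Real.rpow_zero, Real.rpow_one, mul_one]
        have e1 : 1 / (χ * σ / (1 + α * (σ + 1))) = (1 + α * (σ + 1)) / (χ * σ) := by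
          field_simp
        have e2 : 1 / χ * (1 / σ) = 1 / (χ * σ) := by
          field_simp
        rw [e1, e2]
        gcongr <;> nlinarith
      -- lower bound for inner integral
      have hFlog : ∀ ρ ∈ Set.Icc (1:ℝ) s,
          1 / χ * Real.log ρ ≤ ∫ σ in (1:ℝ)..ρ,
            1 / (χ * σ * (σ + 1) ^ ((1:ℝ) - 1) / (1 + α * (σ + 1)) ^ (1:ℝ)) := by
        intro ρ hρ
        have hρ0 : (0:ℝ) < ρ := lt_of_lt_of_le one_pos hρ.1
        have hint1 : IntervalIntegrable (fun σ : ℝ => 1 / χ * (1 / σ)) volume 1 ρ := by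
          apply ContinuousOn.intervalIntegrable
          apply ContinuousOn.mul continuousOn_const
          apply ContinuousOn.div continuousOn_const continuousOn_id
          intro x hx
          have : (0:ℝ) < x := lt_of_lt_of_le (lt_min one_pos hρ0) hx.1
          exact ne_of_gt this
        have hmono := intervalIntegral.integral_mono_on hρ.1 hint1
          (f_intble χ 1 α hχ hα0 one_pos hρ0) (fun σ hσ => hfσ σ hσ.1)
        rw [intervalIntegral.integral_const_mul, integral_one_div
          (by rw [Set.uIcc_of_le hρ.1]; simp), div_one] at hmono
        exact hmono
      -- outer bound
      have hFm := F_mono χ 1 α hχ hα0 hs1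
      have hFint : IntervalIntegrable (fun ρ => ∫ σ in (1:ℝ)..ρ,
          1 / (χ * σ * (σ + 1) ^ ((1:ℝ) - 1) / (1 + α * (σ + 1)) ^ (1:ℝ))) volume 1 s := by
        apply MonotoneOn.intervalIntegrable
        rw [Set.uIcc_of_le hs1]
        exact hFm
      have hlogint : IntervalIntegrable (fun ρ : ℝ => 1 / χ * Real.log ρ) volume 1 s := by
        apply ContinuousOn.intervalIntegrable
        apply ContinuousOn.mul continuousOn_const
        apply Real.continuousOn_log.mono
        intro x hx
        have : (0:ℝ) < x := lt_of_lt_of_le (lt_min one_pos (by linarith)) hx.1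
        simp [ne_of_gt this]
      have houter := intervalIntegral.integral_mono_on hs1 hlogint hFint hFlog
      rw [intervalIntegral.integral_const_mul, integral_log, Real.log_one] at houter
      -- numeric finish
      have hls : (2:ℝ) ≤ Real.log s := by
        have h8 : Real.log 8 ≤ Real.log s := Real.log_le_log (by norm_num) hs8'
        have : Real.log 8 = 3 * Real.log 2 := by
          rw [show (8:ℝ) = 2 ^ (3:ℕ) by norm_num, Real.log_pow]; push_cast; ring
        have h2 := Real.log_two_gt_d9
        nlinarith
      have hlogles : Real.log s ≤ s - 1 := by
        have := Real.log_le_sub_one_of_pos (by linarith : (0:ℝ) < s)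
        linarith
      have hle2 : Real.log (s + Real.exp 1) ≤ 2 * Real.log s := by
        have hse : s + Real.exp 1 ≤ s ^ 2 := by
          have := Real.exp_one_lt_d9
          nlinarith
        calc Real.log (s + Real.exp 1) ≤ Real.log (s ^ 2) :=
              Real.log_le_log (by positivity) hse
          _ = 2 * Real.log s := by rw [Real.log_pow]; push_cast; ring
      have p1 : b * Real.log (s + Real.exp 1) ≤ (s + 1) * (2 * Real.log s) :=
        mul_le_mul hble hle2 hlognn (by linarith)
      have key : b * Real.log (s + Real.exp 1) ≤ 8 * (s * Real.log s - s + 1) := by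
        nlinarith
      have hchain : 1 / (8 * χ) * b * Real.log (s + Real.exp 1) ≤
          1 / χ * (s * Real.log s - 1 * 0 - s + 1) := by
        have e3 : 1 / (8 * χ) * b * Real.log (s + Real.exp 1) =
            1 / χ * (b * Real.log (s + Real.exp 1) / 8) := by ring
        rw [e3]
        exact mul_le_mul_of_nonneg_left (by linarith) (by positivity)
      have hC2 : (0:ℝ) ≤ 27 * (1 / (8 * χ)) := by positivity
      linarith
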